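/- Let t be a term in the signature (⊕, •, ¬, √, 0, ½, 1). Suppose the identity t = 1 holds in every algebra S_A arising from the pair construction over a totally ordered PMV-algebra A with ¬½ = ½. Then t = 1 holds in every √qPMV-algebra. -/

import Mathlib

/-- A quasi-MV algebra. -/
class QMV (α : Type*) where
  add : α → α → α
  neg : α → α
  zero : α
  one : α
  add_assoc : ∀ x y z : α, add x (add y z) = add (add x y) z
  neg_neg : ∀ x : α, neg (neg x) = x
  add_one : ∀ x : α, add x one = one
  luk : ∀ x y : α, add (neg (add (neg x) y)) y = add (neg (add (neg y) x)) x
  neg_add_zero : ∀ x : α, neg (add x zero) = add (neg x) zero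
  add_add_zero : ∀ x y : α, add (add x y) zero = add x y
  neg_zero : neg (zero : α) = one

namespace QMV
variable {α : Type*} [QMV α]
/-- `x ⊙ y := ¬(¬x ⊕ ¬y)` -/
def odot (x y : α) : α := neg (add (neg x) (neg y))
/-- `x ∧ y := x ⊙ (¬x ⊕ y)` -/
def inf (x y : α) : α := odot x (add (neg x) y)
/-- `x ≤ y iff ¬x ⊕ y = 1` -/
def le (x y : α) : Prop := add (neg x) y = one
end QMV

/-- A √qPMV-algebra structure on a quasi-MV algebra. -/
class SQPMV (α : Type*) [QMV α] where
  half : α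
  sqrt : α → α
  mul : α → α → α
  sqrt_neg : ∀ x : α, sqrt (QMV.neg x) = QMV.neg (sqrt x)
  sqrt_sqrt : ∀ x : α, sqrt (sqrt x) = QMV.neg x
  sqrt_add : ∀ x y : α, QMV.add (sqrt (QMV.add x y)) QMV.zero = half
  sqrt_half : sqrt half = half
  mul_comm : ∀ x y : α, mul x y = mul y x
  mul_assoc : ∀ x y z : α, mul x (mul y z) = mul (mul x y) z
  mul_one : ∀ x : α, mul x QMV.one = QMV.add x QMV.zero
  mul_reg : ∀ x y : α, mul x y = QMV.add (mul x y) QMV.zero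
  mul_distrib : ∀ x y z : α,
    mul x (QMV.odot y (QMV.neg z)) = QMV.odot (mul x y) (QMV.neg (mul x z))
  sqrt_mul : ∀ x y : α, QMV.add (sqrt (mul x y)) QMV.zero = half

/-- An MV-algebra. -/
class MV (α : Type*) where
  add : α → α → α
  neg : α → α
  zero : α
  add_assoc : ∀ x y z : α, add x (add y z) = add (add x y) z
  add_comm : ∀ x y : α, add x y = add y x
  add_zero : ∀ x : α, add x zero = x
  neg_neg : ∀ x : α, neg (neg x) = x
  add_top : ∀ x : α, add x (neg zero) = neg zero
  luk : ∀ x y : α, add (neg (add (neg x) y)) y = add (neg (add (neg y) x)) x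

namespace MV
variable {α : Type*} [MV α]
/-- `1 := ¬0` -/
def one : α := neg zero
/-- `x ⊙ y := ¬(¬x ⊕ ¬y)` -/
def odot (x y : α) : α := neg (add (neg x) (neg y))
/-- `x ∧ y := x ⊙ (¬x ⊕ y)` -/
def inf (x y : α) : α := odot x (add (neg x) y)
/-- `x ≤ y iff ¬x ⊕ y = 1` -/
def le (x y : α) : Prop := add (neg x) y = one
end MV

/-- A product MV-algebra (PMV-algebra): an MV-algebra with a commutative monoid
product (unit `1`) satisfying `x • (y ⊙ ¬z) = (x • y) ⊙ ¬(x • z)`. -/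
class PMV (α : Type*) [MV α] where
  mul : α → α → α
  mul_comm : ∀ x y : α, mul x y = mul y x
  mul_assoc : ∀ x y z : α, mul x (mul y z) = mul (mul x y) z
  mul_one : ∀ x : α, mul x MV.one = x
  mul_distrib : ∀ x y z : α,
    mul x (MV.odot y (MV.neg z)) = MV.odot (mul x y) (MV.neg (mul x z))

/-- Terms in the signature `(⊕, •, ¬, √, 0, ½, 1)`. -/
inductive Trm where
  | var : ℕ → Trm
  | zero : Trm
  | half : Trm
  | one : Trm
  | neg : Trm → Trm
  | sqrt : Trm → Trm
  | add : Trm → Trm → Trm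
  | mul : Trm → Trm → Trm

/-- `hasAddSub t` holds iff `t` contains a subterm of the form `s₁ ⊕ s₂`. -/
def hasAddSub : Trm → Prop
  | .var _ => False
  | .zero => False
  | .half => False
  | .one => False
  | .neg t => hasAddSub t
  | .sqrt t => hasAddSub t
  | .add _ _ => True
  | .mul s t => hasAddSub s ∨ hasAddSub t

/-- Evaluation of a term in a √qPMV-algebra under an assignment of the variables. -/
def ev {α : Type*} [QMV α] [SQPMV α] (v : ℕ → α) : Trm → α
  | .var n => v n
  | .zero => QMV.zero
  | .half => SQPMV.half
  | .one => QMV.one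
  | .neg t => QMV.neg (ev v t)
  | .sqrt t => SQPMV.sqrt (ev v t)
  | .add s t => QMV.add (ev v s) (ev v t)
  | .mul s t => SQPMV.mul (ev v s) (ev v t)

/-- Evaluation of a term in the pair construction `S_A` over a PMV-algebra `A`
with distinguished element `half`. -/
def evP {A : Type*} [MV A] [PMV A] (half : A) (v : ℕ → A × A) : Trm → A × A
  | .var n => v n
  | .zero => (MV.zero, half)
  | .half => (half, half)
  | .one => (MV.one, half)
  | .neg t => (MV.neg (evP half v t).1, MV.neg (evP half v t).2)
  | .sqrt t => ((evP half v t).2, MV.neg (evP half v t).1)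
  | .add s t => (MV.add (evP half v s).1 (evP half v t).1, half)
  | .mul s t => (PMV.mul (evP half v s).1 (evP half v t).1, half)

section MVTheory

namespace MVTh

variable {A : Type*} [MV A]



local infixl:65 " ⊹ " => MV.add

/-- truncated subtraction `x ⊖ y = ¬(¬x ⊕ y)` -/
@[reducible] def sub (x y : A) : A := MV.neg (MV.add (MV.neg x) y)

@[reducible] def sup (x y : A) : A := MV.add (sub x y) y

@[reducible] def inf' (x y : A) : A := sub x (sub x y)

theorem one_def : (MV.one : A) = MV.neg MV.zero := rfl

theorem neg_one : MV.neg (MV.one : A) = MV.zero := by rw [one_def, MV.neg_neg]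

theorem add_one (x : A) : x ⊹ MV.one = MV.one := MV.add_top x

theorem one_add (x : A) : MV.one ⊹ x = MV.one := by rw [MV.add_comm]; exact add_one x

theorem zero_add (x : A) : MV.zero ⊹ x = x := by rw [MV.add_comm]; exact MV.add_zero x

theorem neg_inj {x y : A} (h : MV.neg x = MV.neg y) : x = y := by
  have := congrArg MV.neg h; rwa [MV.neg_neg, MV.neg_neg] at this

theorem neg_add_self (x : A) : MV.neg x ⊹ x = MV.one := by
  have := MV.luk (MV.one : A) x
  rwa [neg_one, zero_add, add_one] at this

theorem add_neg_self (x : A) : x ⊹ MV.neg x = MV.one := by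
  rw [MV.add_comm]; exact neg_add_self x

theorem le_def {x y : A} : MV.le x y ↔ MV.neg x ⊹ y = MV.one := Iff.rfl

theorem le_refl (x : A) : MV.le x x := neg_add_self x

theorem le_top (x : A) : MV.le x MV.one := add_one _

theorem bot_le (x : A) : MV.le MV.zero x := by
  rw [le_def, ← one_def]; exact one_add x

theorem le_antisymm {x y : A} (h1 : MV.le x y) (h2 : MV.le y x) : x = y := by
  have := MV.luk x y
  rw [le_def] at h1 h2
  rw [h1, h2, neg_one, zero_add, zero_add] at this
  exact this.symm

/-- if `x ≤ y` then `(y ⊖ x) ⊕ x = y` -/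
theorem sup_eq_of_le {x y : A} (h : MV.le x y) : sup y x = y := by
  unfold sup sub
  rw [le_def] at h
  rw [MV.luk y x, h, neg_one, zero_add]

theorem le_of_eq_add {x y w : A} (h : y = w ⊹ x) : MV.le x y := by
  subst h
  rw [le_def, MV.add_comm w x, MV.add_assoc, neg_add_self, one_add]

theorem le_add_left (x w : A) : MV.le x (w ⊹ x) := le_of_eq_add rfl

theorem le_add_right (x w : A) : MV.le x (x ⊹ w) := by
  rw [MV.add_comm]; exact le_add_left x w

theorem le_trans {x y z : A} (h1 : MV.le x y) (h2 : MV.le y z) : MV.le x z := by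
  have hy : y = sub y x ⊹ x := (sup_eq_of_le h1).symm
  have hz : z = sub z y ⊹ y := (sup_eq_of_le h2).symm
  rw [hy, MV.add_assoc] at hz
  exact le_of_eq_add hz

theorem mono_left {a b : A} (c : A) (h : MV.le a b) : MV.le (a ⊹ c) (b ⊹ c) := by
  have hb : b = sub b a ⊹ a := (sup_eq_of_le h).symm
  apply le_of_eq_add (w := sub b a)
  have h2 : b ⊹ c = (sub b a ⊹ a) ⊹ c := by rw [← hb]
  rw [← MV.add_assoc] at h2
  exact h2

theorem mono_right {a b : A} (c : A) (h : MV.le a b) : MV.le (c ⊹ a) (c ⊹ b) := by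
  rw [MV.add_comm c a, MV.add_comm c b]; exact mono_left c h

theorem add_le_add {a b c d : A} (h1 : MV.le a b) (h2 : MV.le c d) :
    MV.le (a ⊹ c) (b ⊹ d) := le_trans (mono_left c h1) (mono_right b h2)

theorem neg_sub (x y : A) : MV.neg (sub x y) = MV.neg x ⊹ y := by rw [sub, MV.neg_neg]

theorem galois {x y c : A} : MV.le (sub x y) c ↔ MV.le x (y ⊹ c) := by
  rw [le_def, le_def, neg_sub, ← MV.add_assoc]

theorem le_sub_add (x y : A) : MV.le x (sub x y ⊹ y) := by
  rw [MV.add_comm]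
  exact galois.mp (le_refl _)

theorem le_sup_left (x y : A) : MV.le x (sup x y) := le_sub_add x y

theorem le_sup_right (x y : A) : MV.le y (sup x y) := le_add_left y _

theorem sup_comm (x y : A) : sup x y = sup y x := MV.luk x y

theorem sub_le_self_arg {a b : A} (c : A) (h : MV.le a b) : MV.le (sub a c) (sub b c) := by
  rw [galois, MV.add_comm c]
  exact le_trans h (le_sub_add b c)

theorem sup_le {x y z : A} (h1 : MV.le x z) (h2 : MV.le y z) : MV.le (sup x y) z := by
  have h3 := mono_left y (sub_le_self_arg y h1)
  have h4 : sub z y ⊹ y = z := sup_eq_of_le h2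
  rw [h4] at h3
  exact h3

theorem neg_le_neg {x y : A} (h : MV.le x y) : MV.le (MV.neg y) (MV.neg x) := by
  rw [le_def, MV.neg_neg]
  have hy' : sub y x ⊹ x = y := sup_eq_of_le h
  rw [← hy', ← MV.add_assoc, add_neg_self, add_one]

theorem le_of_neg_le_neg {x y : A} (h : MV.le (MV.neg y) (MV.neg x)) : MV.le x y := by
  have := neg_le_neg h; rwa [MV.neg_neg, MV.neg_neg] at this

theorem inf_le_left (x y : A) : MV.le (inf' x y) x := by
  rw [le_def]
  unfold inf'
  rw [neg_sub, MV.add_comm (MV.neg x) (sub x y), ← MV.add_assoc, neg_add_self, add_one]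

theorem inf_le_right (x y : A) : MV.le (inf' x y) y := by
  rw [le_def]
  unfold inf'
  rw [neg_sub, ← MV.add_assoc]
  have h1 : sub x y ⊹ y = sup y x := sup_comm x y
  rw [h1]
  unfold sup
  rw [MV.add_assoc, MV.add_comm (MV.neg x) (sub y x), ← MV.add_assoc, neg_add_self, add_one]

theorem sub_self (x : A) : sub x x = MV.zero := by
  rw [sub, neg_add_self, neg_one]

theorem le_iff_sub_zero {x y : A} : MV.le x y ↔ sub x y = MV.zero := by
  constructor
  · intro h; rw [sub, le_def.mp h, neg_one]
  · intro h
    have := congrArg MV.neg h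
    rw [neg_sub, ← one_def] at this
    rw [le_def]
    rw [this]

theorem le_zero_iff {x : A} : MV.le x MV.zero ↔ x = MV.zero :=
  ⟨fun h => le_antisymm h (bot_le x), fun h => h ▸ le_refl _⟩

theorem sub_sub_eq_of_le {x y : A} (h : MV.le y x) : sub x (sub x y) = y := by
  have hx : x ⊹ MV.neg y = MV.one := by rw [MV.add_comm]; exact le_def.mp h
  have l := MV.luk (MV.neg y) (MV.neg x)
  rw [MV.neg_neg, MV.neg_neg] at l
  have key : MV.neg x ⊹ MV.neg (MV.neg x ⊹ y) = MV.neg y := by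
    rw [MV.add_comm, MV.add_comm (MV.neg x) y, l, hx, neg_one, zero_add]
  unfold sub
  rw [key, MV.neg_neg]

theorem sub_le_sub_right {c d : A} (x : A) (h : MV.le c d) : MV.le (sub x d) (sub x c) := by
  rw [galois, MV.add_comm d]
  exact le_trans (le_sub_add x c) (mono_right _ h)

theorem le_inf {x y z : A} (h1 : MV.le z x) (h2 : MV.le z y) : MV.le z (inf' x y) := by
  have e : sub x (sub x z) = z := sub_sub_eq_of_le h1
  have m1 : MV.le (sub x y) (sub x z) := sub_le_sub_right x h2
  have m2 : MV.le (sub x (sub x z)) (sub x (sub x y)) := sub_le_sub_right x m1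
  rw [e] at m2
  exact m2

theorem inf_comm (x y : A) : inf' x y = inf' y x :=
  le_antisymm (le_inf (inf_le_right x y) (inf_le_left x y))
    (le_inf (inf_le_right y x) (inf_le_left y x))

theorem distrib (x y z : A) : x ⊹ inf' y z = inf' (x ⊹ y) (x ⊹ z) := by
  apply le_antisymm
  · exact le_inf (mono_right x (inf_le_left y z)) (mono_right x (inf_le_right y z))
  · set t := inf' (x ⊹ y) (x ⊹ z) with ht
    have t1 : MV.le (sub t x) y := galois.mpr (inf_le_left _ _)
    have t2 : MV.le (sub t x) z := galois.mpr (inf_le_right _ _)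
    have t3 : MV.le (sub t x) (inf' y z) := le_inf t1 t2
    have t4 : MV.le t (sub t x ⊹ x) := le_sub_add t x
    have t5 : MV.le (sub t x ⊹ x) (inf' y z ⊹ x) := mono_left x t3
    have t6 : MV.le t (inf' y z ⊹ x) := le_trans t4 t5
    rwa [MV.add_comm] at t6

end MVTh
end MVTheory
section MVTheory2

namespace MVTh

variable {A : Type*} [MV A]

local infixl:65 " ⊹ " => MV.add

theorem sub_inf (x y : A) : sub x (inf' x y) = sub x y := by
  apply le_antisymm
  · rw [galois, MV.add_comm, distrib]
    exact le_inf (le_add_left x (sub x y)) (le_sub_add x y)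
  · exact sub_le_sub_right x (inf_le_right x y)

theorem add_sub_cancel_of_le {x y : A} (h : MV.le x (MV.neg y)) : sub (x ⊹ y) y = x := by
  have h2 : MV.le y (MV.neg x) := by
    have := neg_le_neg h; rwa [MV.neg_neg] at this
  have e1 : MV.neg (x ⊹ y) = sub (MV.neg x) y := by
    unfold sub; rw [MV.neg_neg]
  have e2 : sub (MV.neg x) y ⊹ y = MV.neg x := sup_eq_of_le h2
  show MV.neg (MV.neg (x ⊹ y) ⊹ y) = x
  rw [e1, e2, MV.neg_neg]

theorem sub_disjoint (x y : A) : inf' (sub x y) (sub y x) = MV.zero := by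
  have hcx : MV.le (inf' x y) x := inf_le_left x y
  have hcy : MV.le (inf' x y) y := inf_le_right x y
  have hu : sub x (inf' x y) = sub x y := sub_inf x y
  have hv : sub y (inf' x y) = sub y x := by
    have := sub_inf y x; rwa [inf_comm y x] at this
  have hw1 : MV.le (inf' (sub x y) (sub y x)) (MV.neg (inf' x y)) := by
    refine le_trans (inf_le_left _ _) ?_
    rw [← hu]
    exact neg_le_neg (le_add_left (inf' x y) (MV.neg x))
  have e1 : inf' x y ⊹ sub x y = x := by
    rw [← hu, MV.add_comm]; exact sup_eq_of_le hcx
  have e2 : inf' x y ⊹ sub y x = y := by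
    rw [← hv, MV.add_comm]; exact sup_eq_of_le hcy
  have hwc : inf' (sub x y) (sub y x) ⊹ inf' x y = inf' x y := by
    rw [MV.add_comm, distrib, e1, e2]
  have final := add_sub_cancel_of_le hw1
  rw [hwc, sub_self] at final
  exact final.symm

theorem add_disjoint {x y z : A} (h1 : inf' x z = MV.zero) (h2 : inf' y z = MV.zero) :
    inf' (x ⊹ y) z = MV.zero := by
  have k1 : MV.le (inf' (x ⊹ y) z) y := by
    have a1 : MV.le (inf' (x ⊹ y) z) (inf' (y ⊹ x) (y ⊹ z)) := by
      refine le_inf ?_ (le_trans (inf_le_right _ _) (le_add_left z y))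
      rw [MV.add_comm y x]
      exact inf_le_left _ _
    rw [← distrib, h1, MV.add_zero] at a1
    exact a1
  have k3 := le_inf k1 (inf_le_right (x ⊹ y) z)
  rw [h2] at k3
  exact le_zero_iff.mp k3

/-- `n • a` -/
def nsm : ℕ → A → A
  | 0, _ => MV.zero
  | n+1, a => MV.add a (nsm n a)

theorem nsm_disj {a b : A} (h : inf' a b = MV.zero) : ∀ n, inf' (nsm n a) b = MV.zero
  | 0 => le_zero_iff.mp (inf_le_left MV.zero b)
  | n+1 => add_disjoint h (nsm_disj h n)

theorem nsm_disj₂ {a b : A} (h : inf' a b = MV.zero) (n k : ℕ) :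
    inf' (nsm n a) (nsm k b) = MV.zero := by
  have h1 : inf' (nsm n a) b = MV.zero := nsm_disj h n
  have h2 : inf' b (nsm n a) = MV.zero := by rwa [inf_comm] at h1
  have h3 : inf' (nsm k b) (nsm n a) = MV.zero := nsm_disj h2 k
  rwa [inf_comm] at h3

theorem sub_triangle (x y z : A) : MV.le (sub x z) (sub x y ⊹ sub y z) := by
  rw [galois]
  have c1 : MV.le x (sub x y ⊹ y) := le_sub_add x y
  have c2 : MV.le (sub x y ⊹ y) (sub x y ⊹ (sub y z ⊹ z)) := mono_right _ (le_sub_add y z)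
  have e : sub x y ⊹ (sub y z ⊹ z) = z ⊹ (sub x y ⊹ sub y z) := by
    rw [MV.add_assoc, MV.add_comm z]
  rw [← e]
  exact le_trans c1 c2

theorem sub_add_le (x y a : A) : MV.le (sub (x ⊹ a) (y ⊹ a)) (sub x y) := by
  rw [galois]
  have e : (y ⊹ a) ⊹ sub x y = (sub x y ⊹ y) ⊹ a := by
    rw [MV.add_comm (MV.add y a), MV.add_assoc]
  rw [e]
  exact mono_left a (le_sub_add x y)

theorem neg_sub_neg (x y : A) : sub (MV.neg x) (MV.neg y) = sub y x := by
  unfold sub; rw [MV.neg_neg, MV.add_comm]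

section PMVpart
variable [PMV A]

theorem odot_neg (y z : A) : MV.odot y (MV.neg z) = sub y z := by
  unfold MV.odot sub; rw [MV.neg_neg]

theorem mul_sub (x y z : A) :
    PMV.mul x (sub y z) = sub (PMV.mul x y) (PMV.mul x z) := by
  rw [← odot_neg y z, ← odot_neg (PMV.mul x y) (PMV.mul x z)]
  exact PMV.mul_distrib x y z

theorem mul_zero' (c : A) : PMV.mul c MV.zero = MV.zero := by
  calc PMV.mul c MV.zero = PMV.mul c (sub MV.one MV.one) := by rw [sub_self]
    _ = sub (PMV.mul c MV.one) (PMV.mul c MV.one) := mul_sub c MV.one MV.one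
    _ = MV.zero := sub_self _

theorem mul_le_left (c a : A) : MV.le (PMV.mul c a) c := by
  have h1 : sub a MV.one = MV.zero := le_iff_sub_zero.mp (le_top a)
  have h2 : sub (PMV.mul c a) (PMV.mul c MV.one) = MV.zero := by
    rw [← mul_sub, h1, mul_zero']
  have h3 := le_iff_sub_zero.mpr h2
  rwa [PMV.mul_one] at h3

theorem mul_le_right (a w : A) : MV.le (PMV.mul a w) w := by
  rw [PMV.mul_comm]; exact mul_le_left w a

theorem mul_sub_right (x y a : A) :
    sub (PMV.mul x a) (PMV.mul y a) = PMV.mul a (sub x y) := by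
  rw [PMV.mul_comm x a, PMV.mul_comm y a, ← mul_sub]

end PMVpart
end MVTh
end MVTheory2
section MVTheory3

namespace MVTh

variable {A : Type*} [MV A]

local infixl:65 " ⊹ " => MV.add

theorem add_add_add_comm' (a b c d : A) :
    (a ⊹ b) ⊹ (c ⊹ d) = (a ⊹ c) ⊹ (b ⊹ d) := by
  rw [← MV.add_assoc, MV.add_assoc b c d, MV.add_comm b c, ← MV.add_assoc c b d,
    MV.add_assoc]

theorem nsm_add (a : A) : ∀ n k : ℕ, nsm (n + k) a = nsm n a ⊹ nsm k a := by
  intro n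
  induction n with
  | zero => intro k; rw [Nat.zero_add]; exact (zero_add _).symm
  | succ n ih =>
    intro k
    rw [Nat.succ_add]
    show a ⊹ nsm (n + k) a = (a ⊹ nsm n a) ⊹ nsm k a
    rw [ih k, MV.add_assoc]

def IsIdeal (I : Set A) : Prop :=
  MV.zero ∈ I ∧ (∀ x y : A, x ∈ I → y ∈ I → x ⊹ y ∈ I) ∧
    (∀ x y : A, MV.le x y → y ∈ I → x ∈ I)

def IsPrime (I : Set A) : Prop := ∀ a b : A, sub a b ∈ I ∨ sub b a ∈ I

theorem isIdeal_singleton : IsIdeal ({MV.zero} : Set A) := by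
  refine ⟨rfl, ?_, ?_⟩
  · intro x y hx hy
    rw [Set.mem_singleton_iff] at *
    rw [hx, hy, MV.add_zero]
  · intro x y hxy hy
    rw [Set.mem_singleton_iff] at *
    rw [hy] at hxy
    exact le_zero_iff.mp hxy

def genI (I : Set A) (a : A) : Set A := {t | ∃ m ∈ I, ∃ n : ℕ, MV.le t (m ⊹ nsm n a)}

theorem subset_genI (I : Set A) (a : A) : I ⊆ genI I a := by
  intro t ht
  exact ⟨t, ht, 0, le_add_right t _⟩

theorem mem_genI_self {I : Set A} (hI : IsIdeal I) (a : A) : a ∈ genI I a := by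
  refine ⟨MV.zero, hI.1, 1, ?_⟩
  exact le_trans (le_add_right a MV.zero) (le_add_left _ _)

theorem isIdeal_genI {I : Set A} (hI : IsIdeal I) (a : A) : IsIdeal (genI I a) := by
  refine ⟨⟨MV.zero, hI.1, 0, bot_le _⟩, ?_, ?_⟩
  · rintro x y ⟨m1, hm1, n1, hx⟩ ⟨m2, hm2, n2, hy⟩
    refine ⟨m1 ⊹ m2, hI.2.1 m1 m2 hm1 hm2, n1 + n2, ?_⟩
    have e : (m1 ⊹ nsm n1 a) ⊹ (m2 ⊹ nsm n2 a) = (m1 ⊹ m2) ⊹ nsm (n1 + n2) a := by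
      rw [add_add_add_comm', nsm_add]
    have := add_le_add hx hy
    rwa [e] at this
  · rintro x y hxy ⟨m, hm, n, hy⟩
    exact ⟨m, hm, n, le_trans hxy hy⟩

theorem exists_prime_not_mem {z : A} (hz : z ≠ MV.zero) :
    ∃ M : Set A, IsIdeal M ∧ IsPrime M ∧ z ∉ M := by
  obtain ⟨M, hMsub, hmax⟩ := zorn_subset_nonempty {I : Set A | IsIdeal I ∧ z ∉ I}
    (fun c hcS hchain hcne => by
      obtain ⟨I0, hI0⟩ := hcne
      refine ⟨⋃₀ c, ⟨⟨Set.mem_sUnion.mpr ⟨I0, hI0, (hcS hI0).1.1⟩, ?_, ?_⟩, ?_⟩,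
        fun s hs => Set.subset_sUnion_of_mem hs⟩
      · rintro x y ⟨I1, hI1, hx⟩ ⟨I2, hI2, hy⟩
        rcases hchain.total hI1 hI2 with hsub | hsub
        · exact ⟨I2, hI2, (hcS hI2).1.2.1 x y (hsub hx) hy⟩
        · exact ⟨I1, hI1, (hcS hI1).1.2.1 x y hx (hsub hy)⟩
      · rintro x y hxy ⟨I1, hI1, hy⟩
        exact ⟨I1, hI1, (hcS hI1).1.2.2 x y hxy hy⟩
      · rintro ⟨I1, hI1, hzI⟩
        exact (hcS hI1).2 hzI)
    {MV.zero} ⟨isIdeal_singleton, by simpa using hz⟩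
  obtain ⟨⟨hMideal, hzM⟩, hmax2⟩ := hmax
  refine ⟨M, hMideal, ?_, hzM⟩
  intro a b
  by_contra hcon
  push_neg at hcon
  obtain ⟨hu, hv⟩ := hcon
  have key : ∀ w : A, w ∉ M → z ∈ genI M w := by
    intro w hw
    by_contra hzg
    have hgen : genI M w ∈ {I : Set A | IsIdeal I ∧ z ∉ I} := ⟨isIdeal_genI hMideal w, hzg⟩
    have hsub2 := hmax2 hgen (subset_genI M w)
    exact hw (hsub2 (mem_genI_self hMideal w))
  obtain ⟨m1, hm1, n1, h1⟩ := key _ hu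
  obtain ⟨m2, hm2, n2, h2⟩ := key _ hv
  have hb1 : MV.le (m1 ⊹ nsm n1 (sub a b)) ((m1 ⊹ m2) ⊹ nsm n1 (sub a b)) :=
    mono_left _ (le_add_right m1 m2)
  have hb2 : MV.le (m2 ⊹ nsm n2 (sub b a)) ((m1 ⊹ m2) ⊹ nsm n2 (sub b a)) :=
    mono_left _ (le_add_left m2 m1)
  have h3 : MV.le z (inf' ((m1 ⊹ m2) ⊹ nsm n1 (sub a b)) ((m1 ⊹ m2) ⊹ nsm n2 (sub b a))) :=
    le_inf (le_trans h1 hb1) (le_trans h2 hb2)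
  rw [← distrib, nsm_disj₂ (sub_disjoint a b) n1 n2, MV.add_zero] at h3
  exact hzM (hMideal.2.2 z _ h3 (hMideal.2.1 m1 m2 hm1 hm2))

/-! ### Quotient by an ideal -/

def qrel (M : Set A) (x y : A) : Prop := sub x y ∈ M ∧ sub y x ∈ M

theorem qrel_refl {M : Set A} (hM : IsIdeal M) (x : A) : qrel M x x := by
  constructor <;> (rw [sub_self]; exact hM.1)

theorem qrel_symm {M : Set A} {x y : A} (h : qrel M x y) : qrel M y x := ⟨h.2, h.1⟩

theorem qrel_trans {M : Set A} (hM : IsIdeal M) {x y z : A}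
    (h1 : qrel M x y) (h2 : qrel M y z) : qrel M x z := by
  constructor
  · exact hM.2.2 _ _ (sub_triangle x y z) (hM.2.1 _ _ h1.1 h2.1)
  · exact hM.2.2 _ _ (sub_triangle z y x) (hM.2.1 _ _ h2.2 h1.2)

def qsetoid (M : Set A) (hM : IsIdeal M) : Setoid A :=
  ⟨qrel M, ⟨qrel_refl hM, qrel_symm, qrel_trans hM⟩⟩

def QA (M : Set A) (hM : IsIdeal M) : Type _ := Quotient (qsetoid M hM)

def qmk (M : Set A) (hM : IsIdeal M) : A → QA M hM := Quotient.mk (qsetoid M hM)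

theorem qrel_add {M : Set A} (hM : IsIdeal M) {a b c d : A}
    (h1 : qrel M a b) (h2 : qrel M c d) : qrel M (a ⊹ c) (b ⊹ d) := by
  have step : ∀ x y u w : A, sub x y ∈ M → sub u w ∈ M → sub (x ⊹ u) (y ⊹ w) ∈ M := by
    intro x y u w hxy huw
    have t1 : MV.le (sub (x ⊹ u) (y ⊹ w)) (sub (x ⊹ u) (y ⊹ u) ⊹ sub (y ⊹ u) (y ⊹ w)) :=
      sub_triangle _ _ _
    have t2 : MV.le (sub (x ⊹ u) (y ⊹ u)) (sub x y) := sub_add_le x y u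
    have t3 : MV.le (sub (y ⊹ u) (y ⊹ w)) (sub u w) := by
      rw [MV.add_comm y u, MV.add_comm y w]
      exact sub_add_le u w y
    exact hM.2.2 _ _ (le_trans t1 (add_le_add t2 t3)) (hM.2.1 _ _ hxy huw)
  exact ⟨step a b c d h1.1 h2.1, step b a d c h1.2 h2.2⟩

theorem qrel_neg {M : Set A} {a b : A} (h : qrel M a b) :
    qrel M (MV.neg a) (MV.neg b) := by
  constructor
  · rw [neg_sub_neg]; exact h.2
  · rw [neg_sub_neg]; exact h.1

theorem qrel_mul [PMV A] {M : Set A} (hM : IsIdeal M) {a b c d : A}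
    (h1 : qrel M a b) (h2 : qrel M c d) : qrel M (PMV.mul a c) (PMV.mul b d) := by
  have step : ∀ x y u : A, sub x y ∈ M → sub (PMV.mul x u) (PMV.mul y u) ∈ M := by
    intro x y u hxy
    rw [mul_sub_right]
    exact hM.2.2 _ _ (mul_le_right u (sub x y)) hxy
  have k1 : qrel M (PMV.mul a c) (PMV.mul b c) := ⟨step a b c h1.1, step b a c h1.2⟩
  have k2 : qrel M (PMV.mul b c) (PMV.mul b d) := by
    have s2 : ∀ x y u : A, sub x y ∈ M → sub (PMV.mul u x) (PMV.mul u y) ∈ M := by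
      intro x y u hxy
      rw [PMV.mul_comm u x, PMV.mul_comm u y]
      exact step x y u hxy
    exact ⟨s2 c d b h2.1, s2 d c b h2.2⟩
  exact qrel_trans hM k1 k2

def qMV (M : Set A) (hM : IsIdeal M) : MV (QA M hM) where
  add := Quotient.map₂ (· ⊹ ·) (fun _ _ hab _ _ hcd => qrel_add hM hab hcd)
  neg := Quotient.map MV.neg (fun _ _ hab => qrel_neg hab)
  zero := qmk M hM MV.zero
  add_assoc := fun x y z =>
    Quotient.inductionOn₃ x y z fun a b c =>
      congrArg (Quotient.mk _) (MV.add_assoc a b c)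
  add_comm := fun x y =>
    Quotient.inductionOn₂ x y fun a b => congrArg (Quotient.mk _) (MV.add_comm a b)
  add_zero := fun x => Quotient.inductionOn x fun a => congrArg (Quotient.mk _) (MV.add_zero a)
  neg_neg := fun x => Quotient.inductionOn x fun a => congrArg (Quotient.mk _) (MV.neg_neg a)
  add_top := fun x => Quotient.inductionOn x fun a => congrArg (Quotient.mk _) (MV.add_top a)
  luk := fun x y =>
    Quotient.inductionOn₂ x y fun a b => congrArg (Quotient.mk _) (MV.luk a b)

def qPMV [PMV A] (M : Set A) (hM : IsIdeal M) : @PMV (QA M hM) (qMV M hM) :=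
  letI := qMV M hM
  { mul := Quotient.map₂ PMV.mul (fun _ _ hab _ _ hcd => qrel_mul hM hab hcd)
    mul_comm := fun x y =>
      Quotient.inductionOn₂ x y fun a b => congrArg (Quotient.mk _) (PMV.mul_comm a b)
    mul_assoc := fun x y z =>
      Quotient.inductionOn₃ x y z fun a b c =>
        congrArg (Quotient.mk _) (PMV.mul_assoc a b c)
    mul_one := fun x => Quotient.inductionOn x fun a => congrArg (Quotient.mk _) (PMV.mul_one a)
    mul_distrib := fun x y z =>
      Quotient.inductionOn₃ x y z fun a b c =>
        congrArg (Quotient.mk _) (PMV.mul_distrib a b c) }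

theorem qle_of_sub_mem {M : Set A} {hM : IsIdeal M} {a b : A} (h : sub a b ∈ M) :
    @MV.le _ (qMV M hM) (qmk M hM a) (qmk M hM b) := by
  show Quotient.mk (qsetoid M hM) (MV.neg a ⊹ b) = Quotient.mk _ (MV.neg MV.zero)
  apply Quotient.sound
  constructor
  · show sub (MV.neg a ⊹ b) (MV.neg MV.zero) ∈ M
    rw [← one_def, sub, add_one, neg_one]
    exact hM.1
  · show sub (MV.neg MV.zero) (MV.neg a ⊹ b) ∈ M
    rw [← one_def, sub, neg_one, zero_add]
    exact h

theorem qle_total {M : Set A} {hM : IsIdeal M} (hP : IsPrime M) (x y : QA M hM) :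
    @MV.le _ (qMV M hM) x y ∨ @MV.le _ (qMV M hM) y x := by
  refine Quotient.inductionOn₂ x y fun a b => ?_
  rcases hP a b with h | h
  · exact Or.inl (qle_of_sub_mem h)
  · exact Or.inr (qle_of_sub_mem h)

theorem sep {x y : A}
    (h : ∀ (M : Set A) (hM : IsIdeal M), IsPrime M → qmk M hM x = qmk M hM y) : x = y := by
  by_contra hne
  rcases em (sub x y = MV.zero) with h1 | h1
  · have h2 : sub y x ≠ MV.zero := fun h2 =>
      hne (le_antisymm (le_iff_sub_zero.mpr h1) (le_iff_sub_zero.mpr h2))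
    obtain ⟨M, hM, hP, hzM⟩ := exists_prime_not_mem h2
    exact hzM (Quotient.exact (h M hM hP)).2
  · obtain ⟨M, hM, hP, hzM⟩ := exists_prime_not_mem h1
    exact hzM (Quotient.exact (h M hM hP)).1

end MVTh
end MVTheory3
section Transfer

universe u

namespace MVTh

theorem evP_hom {A : Type*} {B : Type*} [MV A] [PMV A] [MV B] [PMV B] (g : A → B)
    (gadd : ∀ x y, g (MV.add x y) = MV.add (g x) (g y))
    (gneg : ∀ x, g (MV.neg x) = MV.neg (g x))
    (gzero : g MV.zero = MV.zero)
    (gmul : ∀ x y, g (PMV.mul x y) = PMV.mul (g x) (g y))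
    (half : A) (v : ℕ → A × A) (t : Trm) :
    evP (g half) (fun n => (g (v n).1, g (v n).2)) t
      = (g (evP half v t).1, g (evP half v t).2) := by
  induction t with
  | var n => rfl
  | zero => simp [evP, gzero]
  | half => rfl
  | one => simp [evP, MV.one, gneg, gzero]
  | neg t ih => simp [evP, ih, gneg]
  | sqrt t ih => simp [evP, ih, gneg]
  | add s t ihs iht => simp [evP, ihs, iht, gadd]
  | mul s t ihs iht => simp [evP, ihs, iht, gmul]

theorem evP_eq_of_chains (t : Trm)
    (h : ∀ (A : Type u) [MV A] [PMV A] (half : A), MV.neg half = half →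
      (∀ x y : A, MV.le x y ∨ MV.le y x) →
      ∀ v : ℕ → A × A, evP half v t = ((MV.one : A), half))
    {A : Type u} [MV A] [PMV A] (half : A) (hh : MV.neg half = half)
    (v : ℕ → A × A) : evP half v t = ((MV.one : A), half) := by
  have key : ∀ (M : Set A) (hM : IsIdeal M), IsPrime M →
      qmk M hM (evP half v t).1 = qmk M hM MV.one ∧
        qmk M hM (evP half v t).2 = qmk M hM half := by
    intro M hM hP
    letI instMVq : MV (QA M hM) := qMV M hM
    letI instPMVq : PMV (QA M hM) := qPMV M hM
    have hom := evP_hom (qmk M hM) (fun _ _ => rfl) (fun _ => rfl) rfl (fun _ _ => rfl)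
      half v t
    have hhq : MV.neg (qmk M hM half) = qmk M hM half := congrArg (qmk M hM) hh
    have happ := h (QA M hM) (qmk M hM half) hhq (qle_total hP)
      (fun n => (qmk M hM (v n).1, qmk M hM (v n).2))
    rw [hom] at happ
    exact ⟨congrArg Prod.fst happ, congrArg Prod.snd happ⟩
  have e1 : (evP half v t).1 = MV.one := sep fun M hM hP => (key M hM hP).1
  have e2 : (evP half v t).2 = half := sep fun M hM hP => (key M hM hP).2
  exact Prod.ext e1 e2

end MVTh
end Transfer
section Concrete

universe u

namespace MVTh

/-- The unit interval of `ℚ` as a PMV chain. -/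
abbrev UIQ : Type := {q : ℚ // 0 ≤ q ∧ q ≤ 1}

instance instMVUIQ : MV UIQ where
  add x y := ⟨min (x.1 + y.1) 1,
    ⟨le_min (add_nonneg x.2.1 y.2.1) zero_le_one, min_le_right _ _⟩⟩
  neg x := ⟨1 - x.1, ⟨by linarith [x.2.2], by linarith [x.2.1]⟩⟩
  zero := ⟨0, by norm_num⟩
  add_assoc x y z := Subtype.ext (by
    show min (x.1 + min (y.1 + z.1) 1) 1 = min (min (x.1 + y.1) 1 + z.1) 1
    have hx := x.2.1; have hx1 := x.2.2
    have hy := y.2.1; have hy1 := y.2.2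
    have hz := z.2.1; have hz1 := z.2.2
    simp only [min_def]
    split_ifs <;> linarith)
  add_comm x y := Subtype.ext (by
    show min (x.1 + y.1) 1 = min (y.1 + x.1) 1
    rw [add_comm])
  add_zero x := Subtype.ext (by
    show min (x.1 + 0) 1 = x.1
    rw [add_zero]
    exact min_eq_left x.2.2)
  neg_neg x := Subtype.ext (by
    show 1 - (1 - x.1) = x.1
    ring)
  add_top x := Subtype.ext (by
    show min (x.1 + (1 - 0)) 1 = 1 - 0
    have := x.2.1
    rw [sub_zero]
    exact min_eq_right (by linarith))
  luk x y := Subtype.ext (by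
    show min (1 - min (1 - x.1 + y.1) 1 + y.1) 1 = min (1 - min (1 - y.1 + x.1) 1 + x.1) 1
    have hx := x.2.1; have hx1 := x.2.2
    have hy := y.2.1; have hy1 := y.2.2
    simp only [min_def]
    split_ifs <;> linarith)

instance instPMVUIQ : PMV UIQ where
  mul x y := ⟨x.1 * y.1, ⟨mul_nonneg x.2.1 y.2.1, mul_le_one₀ x.2.2 y.2.1 y.2.2⟩⟩
  mul_comm x y := Subtype.ext (mul_comm x.1 y.1)
  mul_assoc x y z := Subtype.ext (mul_assoc x.1 y.1 z.1).symm
  mul_one x := Subtype.ext (by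
    show x.1 * (1 - 0) = x.1
    ring)
  mul_distrib x y z := Subtype.ext (by
    show x.1 * (1 - min ((1 - y.1) + (1 - (1 - z.1))) 1)
        = 1 - min ((1 - x.1 * y.1) + (1 - (1 - x.1 * z.1))) 1
    rcases le_total y.1 z.1 with hyz | hyz
    · have h2 : x.1 * y.1 ≤ x.1 * z.1 := mul_le_mul_of_nonneg_left hyz x.2.1
      rw [min_eq_right (by linarith), min_eq_right (by linarith)]
      ring
    · have h2 : x.1 * z.1 ≤ x.1 * y.1 := mul_le_mul_of_nonneg_left hyz x.2.1
      rw [min_eq_left (by linarith), min_eq_left (by linarith)]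
      ring)

def half0 : UIQ := ⟨1/2, by norm_num⟩

theorem neg_half0 : MV.neg half0 = half0 := Subtype.ext (by
  show 1 - (1/2 : ℚ) = 1/2
  norm_num)

theorem total0 : ∀ x y : UIQ, MV.le x y ∨ MV.le y x := by
  intro x y
  rcases le_total x.1 y.1 with h | h
  · left
    apply Subtype.ext
    show min (1 - x.1 + y.1) 1 = 1 - 0
    rw [sub_zero]
    exact min_eq_right (by linarith)
  · right
    apply Subtype.ext
    show min (1 - y.1 + x.1) 1 = 1 - 0
    rw [sub_zero]
    exact min_eq_right (by linarith)

instance instMVU : MV (ULift.{u} UIQ) where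
  add x y := ⟨MV.add x.down y.down⟩
  neg x := ⟨MV.neg x.down⟩
  zero := ⟨MV.zero⟩
  add_assoc x y z := congrArg ULift.up (MV.add_assoc x.down y.down z.down)
  add_comm x y := congrArg ULift.up (MV.add_comm x.down y.down)
  add_zero x := congrArg ULift.up (MV.add_zero x.down)
  neg_neg x := congrArg ULift.up (MV.neg_neg x.down)
  add_top x := congrArg ULift.up (MV.add_top x.down)
  luk x y := congrArg ULift.up (MV.luk x.down y.down)

instance instPMVU : PMV (ULift.{u} UIQ) where
  mul x y := ⟨PMV.mul x.down y.down⟩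
  mul_comm x y := congrArg ULift.up (PMV.mul_comm x.down y.down)
  mul_assoc x y z := congrArg ULift.up (PMV.mul_assoc x.down y.down z.down)
  mul_one x := congrArg ULift.up (PMV.mul_one x.down)
  mul_distrib x y z := congrArg ULift.up (PMV.mul_distrib x.down y.down z.down)

def uhalf : ULift.{u} UIQ := ⟨half0⟩

theorem neg_uhalf : MV.neg (uhalf.{u}) = uhalf.{u} := congrArg ULift.up neg_half0

theorem total_u : ∀ x y : ULift.{u} UIQ, MV.le x y ∨ MV.le y x := by
  intro x y
  rcases total0 x.down y.down with h | h
  · exact Or.inl (congrArg ULift.up h)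
  · exact Or.inr (congrArg ULift.up h)

/-! ### strip analysis of terms -/

def gP {A : Type*} [MV A] (p : A × A) : A × A := (p.2, MV.neg p.1)

def stripV : Trm → Option (ℕ × ℕ)
  | .var n => some (n, 0)
  | .neg t => (stripV t).map (fun p => (p.1, p.2 + 2))
  | .sqrt t => (stripV t).map (fun p => (p.1, p.2 + 1))
  | _ => none

theorem evP_stripV {A : Type*} [MV A] [PMV A] (half : A) (v : ℕ → A × A) :
    ∀ {t : Trm} {n k : ℕ}, stripV t = some (n, k) →
      evP half v t = gP^[k] (v n) := by
  intro t
  induction t with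
  | var m =>
    intro n k hs
    simp only [stripV, Option.some.injEq, Prod.mk.injEq] at hs
    rw [← hs.1, ← hs.2]
    rfl
  | neg t ih =>
    intro n k hs
    simp only [stripV, Option.map_eq_some_iff] at hs
    obtain ⟨⟨n', k'⟩, ht, hpk⟩ := hs
    have h1 : n' = n := congrArg Prod.fst hpk
    have h2 : k' + 2 = k := congrArg Prod.snd hpk
    subst h1; subst h2
    rw [Nat.add_comm k' 2, Function.iterate_add_apply, ← ih ht]
    rfl
  | sqrt t ih =>
    intro n k hs
    simp only [stripV, Option.map_eq_some_iff] at hs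
    obtain ⟨⟨n', k'⟩, ht, hpk⟩ := hs
    have h1 : n' = n := congrArg Prod.fst hpk
    have h2 : k' + 1 = k := congrArg Prod.snd hpk
    subst h1; subst h2
    rw [Nat.add_comm k' 1, Function.iterate_add_apply, ← ih ht]
    rfl
  | zero => intro n k hs; simp [stripV] at hs
  | half => intro n k hs; simp [stripV] at hs
  | one => intro n k hs; simp [stripV] at hs
  | add s t ihs iht => intro n k hs; simp [stripV] at hs
  | mul s t ihs iht => intro n k hs; simp [stripV] at hs

theorem gP_iter_mem (k : ℕ) :
    ((gP^[k] (((MV.zero : ULift.{u} UIQ), (MV.zero : ULift.{u} UIQ)))).1 = MV.zero ∨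
      (gP^[k] (((MV.zero : ULift.{u} UIQ), (MV.zero : ULift.{u} UIQ)))).1 = MV.one) ∧
    ((gP^[k] (((MV.zero : ULift.{u} UIQ), (MV.zero : ULift.{u} UIQ)))).2 = MV.zero ∨
      (gP^[k] (((MV.zero : ULift.{u} UIQ), (MV.zero : ULift.{u} UIQ)))).2 = MV.one) := by
  induction k with
  | zero => exact ⟨Or.inl rfl, Or.inl rfl⟩
  | succ k ih =>
    rw [Function.iterate_succ_apply']
    obtain ⟨ih1, ih2⟩ := ih
    constructor
    · exact ih2
    · show MV.neg (gP^[k] _).1 = MV.zero ∨ MV.neg (gP^[k] _).1 = MV.one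
      rcases ih1 with h | h
      · rw [h]; exact Or.inr rfl
      · rw [h]; left; exact MV.neg_neg MV.zero

theorem half0_ne_zero : (uhalf.{u} : ULift UIQ) ≠ MV.zero := by
  intro hcon
  have h2 : (uhalf.{u}).down.1 = ((MV.zero : ULift.{u} UIQ)).down.1 :=
    congrArg (fun w : ULift UIQ => w.down.1) hcon
  rw [show ((MV.zero : ULift.{u} UIQ)).down.1 = 0 from rfl,
    show (uhalf.{u}).down.1 = 1/2 from rfl] at h2
  norm_num at h2

theorem half0_ne_one : (uhalf.{u} : ULift UIQ) ≠ MV.one := by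
  intro hcon
  have h2 : (uhalf.{u}).down.1 = ((MV.one : ULift.{u} UIQ)).down.1 :=
    congrArg (fun w : ULift UIQ => w.down.1) hcon
  rw [show ((MV.one : ULift.{u} UIQ)).down.1 = 1 - 0 from rfl,
    show (uhalf.{u}).down.1 = 1/2 from rfl] at h2
  norm_num at h2

end MVTh
end Concrete
section Bside

universe u

namespace SQ

local infixl:65 " ⊹ " => QMV.add

variable {B : Type*} [QMV B] [SQPMV B]

theorem q_neg_one : QMV.neg (QMV.one : B) = QMV.zero := by
  rw [← QMV.neg_zero, QMV.neg_neg]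

theorem q_one_zero : (QMV.one : B) ⊹ QMV.zero = QMV.one := by
  have l := QMV.luk (QMV.one : B) QMV.zero
  rw [QMV.add_one] at l
  rw [q_neg_one] at l
  rw [QMV.neg_add_zero, QMV.neg_zero] at l
  rw [QMV.add_add_zero] at l
  exact l

theorem q_zero_zero : (QMV.zero : B) ⊹ QMV.zero = QMV.zero := by
  have h1 : QMV.neg ((QMV.zero : B) ⊹ QMV.zero) = QMV.neg QMV.zero := by
    rw [QMV.neg_add_zero, QMV.neg_zero, q_one_zero]
  have := congrArg QMV.neg h1
  rwa [QMV.neg_neg, QMV.neg_neg] at this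

theorem q_neg_half : QMV.neg (SQPMV.half : B) = SQPMV.half := by
  have h1 := SQPMV.sqrt_sqrt (SQPMV.half : B)
  rw [SQPMV.sqrt_half, SQPMV.sqrt_half] at h1
  exact h1.symm

theorem q_sqrt_zero : SQPMV.sqrt (QMV.zero : B) ⊹ QMV.zero = SQPMV.half := by
  have := SQPMV.sqrt_add (QMV.zero : B) QMV.zero
  rwa [q_zero_zero] at this

theorem q_half_zero : (SQPMV.half : B) ⊹ QMV.zero = SQPMV.half := by
  have h2 := QMV.add_add_zero (SQPMV.sqrt (QMV.zero : B)) QMV.zero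
  rwa [q_sqrt_zero] at h2

theorem q_sqrt_reg {x : B} (hx : x ⊹ QMV.zero = x) :
    SQPMV.sqrt x ⊹ QMV.zero = SQPMV.half := by
  have := SQPMV.sqrt_add x QMV.zero
  rwa [hx] at this

theorem q_mul_one' (w : B) : SQPMV.mul QMV.one w = w ⊹ QMV.zero := by
  rw [SQPMV.mul_comm, SQPMV.mul_one]

theorem q_lam (x z : B) : x ⊹ z = (x ⊹ QMV.zero) ⊹ (z ⊹ QMV.zero) := by
  have key : ∀ y z : B, QMV.neg y ⊹ z = (QMV.neg y ⊹ QMV.zero) ⊹ (z ⊹ QMV.zero) := by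
    intro y z
    have d := SQPMV.mul_distrib (QMV.one : B) y z
    rw [q_mul_one', q_mul_one', q_mul_one'] at d
    unfold QMV.odot at d
    rw [QMV.neg_neg, QMV.neg_neg] at d
    rw [← QMV.neg_add_zero, QMV.add_add_zero] at d
    rw [QMV.neg_add_zero y] at d
    have := congrArg QMV.neg d
    rwa [QMV.neg_neg, QMV.neg_neg] at this
  have := key (QMV.neg x) z
  rwa [QMV.neg_neg] at this

theorem q_lam_mul (x y : B) :
    SQPMV.mul x y = SQPMV.mul (x ⊹ QMV.zero) (y ⊹ QMV.zero) := by
  have e1 : SQPMV.mul (QMV.one : B) (SQPMV.mul y QMV.one) = SQPMV.mul y QMV.one := by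
    rw [q_mul_one', SQPMV.mul_one, QMV.add_add_zero]
  calc SQPMV.mul x y
      = SQPMV.mul x (SQPMV.mul y QMV.one) ⊹ QMV.zero := by
        rw [SQPMV.mul_assoc, SQPMV.mul_one (SQPMV.mul x y), QMV.add_add_zero]
        exact SQPMV.mul_reg _ _
    _ = SQPMV.mul x (SQPMV.mul QMV.one (SQPMV.mul y QMV.one)) ⊹ QMV.zero := by rw [e1]
    _ = SQPMV.mul (SQPMV.mul x QMV.one) (SQPMV.mul y QMV.one) ⊹ QMV.zero := by
        rw [SQPMV.mul_assoc]
    _ = SQPMV.mul (x ⊹ QMV.zero) (y ⊹ QMV.zero) ⊹ QMV.zero := by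
        rw [SQPMV.mul_one, SQPMV.mul_one]
    _ = SQPMV.mul (x ⊹ QMV.zero) (y ⊹ QMV.zero) := (SQPMV.mul_reg _ _).symm

end SQ

/-! ### commutativity of `⊕` on regular elements -/

namespace RC

local infixl:65 " ⊹ " => QMV.add

variable {G : Type*} [QMV G] (hreg : ∀ x : G, QMV.add x QMV.zero = x)

theorem rneg_one : QMV.neg (QMV.one : G) = QMV.zero := by
  rw [← QMV.neg_zero, QMV.neg_neg]

include hreg

theorem r_star (x : G) : QMV.neg (QMV.zero ⊹ x) ⊹ x = QMV.one := by
  have l := QMV.luk x (QMV.one : G)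
  rw [QMV.add_one] at l
  rw [rneg_one] at l
  exact l.symm

theorem r_starstar (x : G) : QMV.neg (QMV.one ⊹ x) ⊹ x = x := by
  have l := QMV.luk x (QMV.zero : G)
  rw [hreg, hreg, QMV.neg_neg, QMV.neg_zero] at l
  exact l.symm

theorem r_diamond (x : G) : QMV.neg x ⊹ x = QMV.one ⊹ x := by
  have h1 : QMV.neg x ⊹ (QMV.one ⊹ x) = QMV.one ⊹ x := by
    rw [QMV.add_assoc, QMV.add_one]
  have h2 : QMV.neg (QMV.one ⊹ x) ⊹ (QMV.one ⊹ x) = QMV.one ⊹ x := by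
    rw [QMV.add_assoc, QMV.add_one]
  have l := QMV.luk x (QMV.one ⊹ x)
  rw [h1, h2, r_starstar hreg] at l
  exact l.symm

theorem r_Z (x : G) : QMV.zero ⊹ x = x := by
  have l := QMV.luk x (QMV.zero ⊹ x)
  have e1 : QMV.neg x ⊹ (QMV.zero ⊹ x) = QMV.one ⊹ x := by
    rw [QMV.add_assoc, hreg, r_diamond hreg]
  have e2 : QMV.neg (QMV.one ⊹ x) ⊹ (QMV.zero ⊹ x) = x := by
    rw [QMV.add_assoc, hreg, r_starstar hreg]
  rw [e1, e2, r_star hreg, rneg_one] at l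
  exact l.symm

theorem r_neg_add_self (x : G) : QMV.neg x ⊹ x = QMV.one := by
  have := r_star hreg x
  rwa [r_Z hreg] at this

theorem r_add_neg_self (x : G) : x ⊹ QMV.neg x = QMV.one := by
  have := r_neg_add_self hreg (QMV.neg x)
  rwa [QMV.neg_neg] at this

theorem r_char {x y : G} (h : QMV.neg x ⊹ y = QMV.one) :
    QMV.neg (QMV.neg y ⊹ x) ⊹ x = y := by
  have l := QMV.luk y x
  rw [h, rneg_one, r_Z hreg] at l
  exact l

theorem r_P (x w : G) : QMV.neg x ⊹ (w ⊹ x) = QMV.one := by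
  have l := QMV.luk (QMV.neg (w ⊹ x)) (QMV.neg x)
  rw [QMV.neg_neg, QMV.neg_neg] at l
  have e1 : (w ⊹ x) ⊹ QMV.neg x = QMV.one := by
    rw [← QMV.add_assoc, r_add_neg_self hreg, QMV.add_one]
  rw [e1, rneg_one, r_Z hreg] at l
  -- l : QMV.neg x = QMV.neg (x ⊹ QMV.neg (w ⊹ x)) ⊹ QMV.neg (w ⊹ x)
  rw [l, ← QMV.add_assoc, r_neg_add_self hreg, QMV.add_one]

theorem r_comm_one {s t : G} (h : s ⊹ t = QMV.one) : t ⊹ s = QMV.one := by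
  have h' : QMV.neg (QMV.neg s) ⊹ t = QMV.one := by rwa [QMV.neg_neg]
  have e := r_char hreg h'
  rw [← e, ← QMV.add_assoc, r_neg_add_self hreg, QMV.add_one]

theorem r_cyc {p q r : G} (h : p ⊹ (q ⊹ r) = QMV.one) : q ⊹ (r ⊹ p) = QMV.one := by
  rw [QMV.add_assoc] at h
  have h2 := r_comm_one hreg h
  rw [QMV.add_assoc] at h2
  exact r_comm_one hreg h2

theorem r_antisymm {a b : G} (h1 : QMV.neg a ⊹ b = QMV.one) (h2 : QMV.neg b ⊹ a = QMV.one) :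
    a = b := by
  have l := QMV.luk a b
  rw [h1, h2, rneg_one, r_Z hreg, r_Z hreg] at l
  exact l.symm

theorem r_main (q r : G) : QMV.neg (q ⊹ r) ⊹ (r ⊹ q) = QMV.one := by
  have liii := QMV.luk (QMV.neg q) r
  rw [QMV.neg_neg] at liii
  -- liii : ¬(q ⊹ r) ⊹ r = ¬(¬r ⊹ ¬q) ⊹ ¬q
  have hp := r_P hreg (QMV.neg q) (QMV.neg (QMV.neg r ⊹ QMV.neg q))
  rw [QMV.neg_neg] at hp
  -- hp : q ⊹ (¬(¬r ⊹ ¬q) ⊹ ¬q) = 1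
  rw [← liii] at hp
  -- hp : q ⊹ (¬(q ⊹ r) ⊹ r) = 1
  exact r_cyc hreg hp

theorem r_comm (x y : G) : x ⊹ y = y ⊹ x :=
  r_antisymm hreg (r_main hreg x y) (r_main hreg y x)

end RC

/-! ### the regular subalgebra -/

section RegAlg

universe v

def Reg (B : Type v) [QMV B] : Type v := {x : B // QMV.add x QMV.zero = x}

variable {B : Type*} [QMV B] [SQPMV B]

instance instQMVReg : QMV (Reg B) where
  add x y := ⟨QMV.add x.1 y.1, QMV.add_add_zero _ _⟩
  neg x := ⟨QMV.neg x.1, by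
    conv_rhs => rw [← x.2]
    rw [QMV.neg_add_zero, ← x.2, QMV.neg_add_zero, QMV.add_add_zero]⟩
  zero := ⟨QMV.zero, SQ.q_zero_zero⟩
  one := ⟨QMV.one, SQ.q_one_zero⟩
  add_assoc x y z := Subtype.ext (QMV.add_assoc x.1 y.1 z.1)
  neg_neg x := Subtype.ext (QMV.neg_neg x.1)
  add_one x := Subtype.ext (QMV.add_one x.1)
  luk x y := Subtype.ext (QMV.luk x.1 y.1)
  neg_add_zero x := Subtype.ext (QMV.neg_add_zero x.1)
  add_add_zero x y := Subtype.ext (QMV.add_add_zero x.1 y.1)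
  neg_zero := Subtype.ext QMV.neg_zero

theorem hregReg : ∀ x : Reg B, QMV.add x QMV.zero = x := fun x => Subtype.ext x.2

instance instMVReg : MV (Reg B) where
  add := QMV.add
  neg := QMV.neg
  zero := QMV.zero
  add_assoc := QMV.add_assoc
  add_comm := RC.r_comm hregReg
  add_zero := hregReg
  neg_neg := QMV.neg_neg
  add_top x := by rw [QMV.neg_zero]; exact QMV.add_one x
  luk := QMV.luk

instance instPMVReg : PMV (Reg B) where
  mul x y := ⟨SQPMV.mul x.1 y.1, (SQPMV.mul_reg x.1 y.1).symm⟩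
  mul_comm x y := Subtype.ext (SQPMV.mul_comm x.1 y.1)
  mul_assoc x y z := Subtype.ext (SQPMV.mul_assoc x.1 y.1 z.1)
  mul_one x := by
    apply Subtype.ext
    show SQPMV.mul x.1 (QMV.neg QMV.zero) = x.1
    rw [QMV.neg_zero, SQPMV.mul_one, x.2]
  mul_distrib x y z := Subtype.ext (SQPMV.mul_distrib x.1 y.1 z.1)

def halfR : Reg B := ⟨SQPMV.half, SQ.q_half_zero⟩

theorem neg_halfR : MV.neg (halfR : Reg B) = halfR := Subtype.ext SQ.q_neg_half

/-- the coordinate map `x ↦ (x ⊕ 0, √x ⊕ 0)` -/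
def fR (x : B) : Reg B × Reg B :=
  (⟨QMV.add x QMV.zero, QMV.add_add_zero x QMV.zero⟩,
   ⟨QMV.add (SQPMV.sqrt x) QMV.zero, QMV.add_add_zero _ _⟩)

theorem homEv (v : ℕ → B) : ∀ t : Trm,
    evP (halfR : Reg B) (fun n => fR (v n)) t = fR (ev v t) := by
  intro t
  induction t with
  | var n => rfl
  | zero =>
    show ((MV.zero : Reg B), (halfR : Reg B)) = fR QMV.zero
    unfold fR
    refine Prod.ext (Subtype.ext ?_) (Subtype.ext ?_)
    · exact SQ.q_zero_zero.symm
    · exact SQ.q_sqrt_zero.symm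
  | half =>
    show ((halfR : Reg B), (halfR : Reg B)) = fR SQPMV.half
    unfold fR
    refine Prod.ext (Subtype.ext ?_) (Subtype.ext ?_)
    · exact SQ.q_half_zero.symm
    · show SQPMV.half = QMV.add (SQPMV.sqrt SQPMV.half) QMV.zero
      rw [SQPMV.sqrt_half]
      exact SQ.q_half_zero.symm
  | one =>
    show ((MV.one : Reg B), (halfR : Reg B)) = fR QMV.one
    unfold fR
    refine Prod.ext (Subtype.ext ?_) (Subtype.ext ?_)
    · show QMV.neg QMV.zero = QMV.add QMV.one QMV.zero
      rw [QMV.neg_zero, SQ.q_one_zero]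
    · exact (SQ.q_sqrt_reg SQ.q_one_zero).symm
  | neg t ih =>
    show (MV.neg (evP (halfR : Reg B) (fun n => fR (v n)) t).1,
          MV.neg (evP (halfR : Reg B) (fun n => fR (v n)) t).2) = fR (QMV.neg (ev v t))
    rw [ih]
    unfold fR
    refine Prod.ext (Subtype.ext ?_) (Subtype.ext ?_)
    · show QMV.neg (QMV.add (ev v t) QMV.zero) = QMV.add (QMV.neg (ev v t)) QMV.zero
      exact QMV.neg_add_zero (ev v t)
    · show QMV.neg (QMV.add (SQPMV.sqrt (ev v t)) QMV.zero)
        = QMV.add (SQPMV.sqrt (QMV.neg (ev v t))) QMV.zero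
      rw [SQPMV.sqrt_neg, QMV.neg_add_zero]
  | sqrt t ih =>
    show ((evP (halfR : Reg B) (fun n => fR (v n)) t).2,
          MV.neg (evP (halfR : Reg B) (fun n => fR (v n)) t).1)
        = fR (SQPMV.sqrt (ev v t))
    rw [ih]
    unfold fR
    refine Prod.ext (Subtype.ext ?_) (Subtype.ext ?_)
    · rfl
    · show QMV.neg (QMV.add (ev v t) QMV.zero)
        = QMV.add (SQPMV.sqrt (SQPMV.sqrt (ev v t))) QMV.zero
      rw [SQPMV.sqrt_sqrt, QMV.neg_add_zero]
  | add s t ihs iht =>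
    show (MV.add (evP (halfR : Reg B) (fun n => fR (v n)) s).1
            (evP (halfR : Reg B) (fun n => fR (v n)) t).1, (halfR : Reg B))
        = fR (QMV.add (ev v s) (ev v t))
    rw [ihs, iht]
    unfold fR
    refine Prod.ext (Subtype.ext ?_) (Subtype.ext ?_)
    · show QMV.add (QMV.add (ev v s) QMV.zero) (QMV.add (ev v t) QMV.zero)
        = QMV.add (QMV.add (ev v s) (ev v t)) QMV.zero
      rw [QMV.add_add_zero]
      exact (SQ.q_lam _ _).symm
    · exact (SQ.q_sqrt_reg (QMV.add_add_zero (ev v s) (ev v t))).symm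
  | mul s t ihs iht =>
    show (PMV.mul (evP (halfR : Reg B) (fun n => fR (v n)) s).1
            (evP (halfR : Reg B) (fun n => fR (v n)) t).1, (halfR : Reg B))
        = fR (SQPMV.mul (ev v s) (ev v t))
    rw [ihs, iht]
    unfold fR
    refine Prod.ext (Subtype.ext ?_) (Subtype.ext ?_)
    · show SQPMV.mul (QMV.add (ev v s) QMV.zero) (QMV.add (ev v t) QMV.zero)
        = QMV.add (SQPMV.mul (ev v s) (ev v t)) QMV.zero
      rw [← SQ.q_lam_mul]
      exact SQPMV.mul_reg _ _
    · exact (SQPMV.sqrt_mul (ev v s) (ev v t)).symm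

/-! ### iterates of sqrt -/

theorem ev_stripV (v : ℕ → B) : ∀ {t : Trm} {n k : ℕ}, MVTh.stripV t = some (n, k) →
    ev v t = SQPMV.sqrt^[k] (v n) := by
  intro t
  induction t with
  | var m =>
    intro n k hs
    simp only [MVTh.stripV, Option.some.injEq, Prod.mk.injEq] at hs
    rw [← hs.1, ← hs.2]
    rfl
  | neg t ih =>
    intro n k hs
    simp only [MVTh.stripV, Option.map_eq_some_iff] at hs
    obtain ⟨⟨n', k'⟩, ht, hpk⟩ := hs
    have h1 : n' = n := congrArg Prod.fst hpk
    have h2 : k' + 2 = k := congrArg Prod.snd hpk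
    subst h1; subst h2
    rw [Nat.add_comm k' 2, Function.iterate_add_apply]
    show QMV.neg (ev v t) = SQPMV.sqrt (SQPMV.sqrt (SQPMV.sqrt^[k'] (v n')))
    rw [ih ht, SQPMV.sqrt_sqrt]
  | sqrt t ih =>
    intro n k hs
    simp only [MVTh.stripV, Option.map_eq_some_iff] at hs
    obtain ⟨⟨n', k'⟩, ht, hpk⟩ := hs
    have h1 : n' = n := congrArg Prod.fst hpk
    have h2 : k' + 1 = k := congrArg Prod.snd hpk
    subst h1; subst h2
    rw [Nat.add_comm k' 1, Function.iterate_add_apply]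
    show SQPMV.sqrt (ev v t) = SQPMV.sqrt (SQPMV.sqrt^[k'] (v n'))
    rw [ih ht]
  | zero => intro n k hs; simp [MVTh.stripV] at hs
  | half => intro n k hs; simp [MVTh.stripV] at hs
  | one => intro n k hs; simp [MVTh.stripV] at hs
  | add s t ihs iht => intro n k hs; simp [MVTh.stripV] at hs
  | mul s t ihs iht => intro n k hs; simp [MVTh.stripV] at hs

theorem ev_strip_none (v : ℕ → B) : ∀ {t : Trm}, MVTh.stripV t = none →
    ∃ (k : ℕ) (r : B), QMV.add r QMV.zero = r ∧ ev v t = SQPMV.sqrt^[k] r := by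
  intro t
  induction t with
  | var m => intro hs; simp [MVTh.stripV] at hs
  | zero => intro _; exact ⟨0, QMV.zero, SQ.q_zero_zero, rfl⟩
  | half => intro _; exact ⟨0, SQPMV.half, SQ.q_half_zero, rfl⟩
  | one => intro _; exact ⟨0, QMV.one, SQ.q_one_zero, rfl⟩
  | add s t ihs iht =>
    intro _
    exact ⟨0, QMV.add (ev v s) (ev v t), QMV.add_add_zero _ _, rfl⟩
  | mul s t ihs iht =>
    intro _
    exact ⟨0, SQPMV.mul (ev v s) (ev v t), (SQPMV.mul_reg _ _).symm, rfl⟩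
  | neg t ih =>
    intro hs
    simp only [MVTh.stripV, Option.map_eq_none_iff] at hs
    obtain ⟨k, r, hr, he⟩ := ih hs
    refine ⟨k + 2, r, hr, ?_⟩
    rw [Nat.add_comm k 2, Function.iterate_add_apply]
    show QMV.neg (ev v t) = SQPMV.sqrt (SQPMV.sqrt (SQPMV.sqrt^[k] r))
    rw [he, SQPMV.sqrt_sqrt]
  | sqrt t ih =>
    intro hs
    simp only [MVTh.stripV, Option.map_eq_none_iff] at hs
    obtain ⟨k, r, hr, he⟩ := ih hs
    refine ⟨k + 1, r, hr, ?_⟩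
    rw [Nat.add_comm k 1, Function.iterate_add_apply]
    show SQPMV.sqrt (ev v t) = SQPMV.sqrt (SQPMV.sqrt^[k] r)
    rw [he]

theorem sqrt_iterate_four (x : B) : SQPMV.sqrt^[4] x = x := by
  show SQPMV.sqrt (SQPMV.sqrt (SQPMV.sqrt (SQPMV.sqrt x))) = x
  rw [SQPMV.sqrt_sqrt, SQPMV.sqrt_sqrt, QMV.neg_neg]

theorem sqrt_iterate_four_mul (q : ℕ) (x : B) : SQPMV.sqrt^[4 * q] x = x := by
  induction q with
  | zero => rfl
  | succ q ih =>
    rw [Nat.mul_succ, Function.iterate_add_apply, sqrt_iterate_four, ih]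

theorem sqrt_iterate_mod (k : ℕ) (x : B) :
    SQPMV.sqrt^[k] x = SQPMV.sqrt^[k % 4] x := by
  conv_lhs => rw [← Nat.mod_add_div k 4]
  rw [Function.iterate_add_apply, sqrt_iterate_four_mul]

end RegAlg
end Bside
/-- If `t = 1` holds in every pair construction `S_A` over a totally ordered
PMV-algebra `A` with `¬½ = ½`, then `t = 1` holds in every √qPMV-algebra. -/
theorem pair_chains_complete_for_sqpmv (t : Trm)
    (h : ∀ (A : Type u) [MV A] [PMV A] (half : A), MV.neg half = half →
      (∀ x y : A, MV.le x y ∨ MV.le y x) →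
      ∀ v : ℕ → A × A, evP half v t = ((MV.one : A), half)) :
    ∀ (B : Type u) [QMV B] [SQPMV B] (v : ℕ → B), ev v t = QMV.one := by
  intro B _ _ v
  cases hs : MVTh.stripV t with
  | some nk =>
    exfalso
    obtain ⟨n, k⟩ := nk
    have happ := h (ULift.{u} MVTh.UIQ) MVTh.uhalf MVTh.neg_uhalf MVTh.total_u
      (fun _ => ((MV.zero : ULift.{u} MVTh.UIQ), (MV.zero : ULift.{u} MVTh.UIQ)))
    rw [MVTh.evP_stripV _ _ hs] at happ
    have hsnd : (MVTh.gP^[k]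
        (((MV.zero : ULift.{u} MVTh.UIQ)), (MV.zero : ULift.{u} MVTh.UIQ))).2 = MVTh.uhalf :=
      congrArg Prod.snd happ
    rcases (MVTh.gP_iter_mem.{u} k).2 with h2 | h2
    · exact MVTh.half0_ne_zero.{u} (hsnd.symm.trans h2)
    · exact MVTh.half0_ne_one.{u} (hsnd.symm.trans h2)
  | none =>
    obtain ⟨k, r, hr, hev⟩ := ev_strip_none v hs
    have key := MVTh.evP_eq_of_chains.{u} t h (halfR : Reg B) neg_halfR (fun n => fR (v n))
    rw [homEv v t] at key
    have h1 : QMV.add (ev v t) QMV.zero = QMV.neg QMV.zero :=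
      congrArg (fun p : Reg B × Reg B => p.1.val) key
    rw [QMV.neg_zero] at h1
    have h2 : QMV.add (SQPMV.sqrt (ev v t)) QMV.zero = SQPMV.half :=
      congrArg (fun p : Reg B × Reg B => p.2.val) key
    rw [hev, sqrt_iterate_mod] at h1 h2 ⊢
    have hk : k % 4 = 0 ∨ k % 4 = 1 ∨ k % 4 = 2 ∨ k % 4 = 3 := by omega
    rcases hk with hk | hk | hk | hk <;> rw [hk] at h1 h2 ⊢
    · rw [Function.iterate_zero_apply] at h1 ⊢
      rw [hr] at h1
      exact h1
    · have e1 : SQPMV.sqrt^[1] r = SQPMV.sqrt r := rfl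
      rw [e1] at h1 h2 ⊢
      have hhalf1 : (SQPMV.half : B) = QMV.one := by
        rw [← SQ.q_sqrt_reg hr]; exact h1
      rw [SQPMV.sqrt_sqrt, ← QMV.neg_add_zero, hr] at h2
      have hr2 : r = SQPMV.half := by
        have := congrArg QMV.neg h2
        rwa [QMV.neg_neg, SQ.q_neg_half] at this
      rw [hr2, SQPMV.sqrt_half, hhalf1]
    · have e2 : SQPMV.sqrt^[2] r = QMV.neg r := SQPMV.sqrt_sqrt r
      rw [e2] at h1 ⊢
      rw [← QMV.neg_add_zero, hr] at h1
      exact h1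
    · have e3 : SQPMV.sqrt^[3] r = QMV.neg (SQPMV.sqrt r) := SQPMV.sqrt_sqrt (SQPMV.sqrt r)
      rw [e3] at h1 h2 ⊢
      rw [← QMV.neg_add_zero, SQ.q_sqrt_reg hr, SQ.q_neg_half] at h1
      rw [SQPMV.sqrt_neg, SQPMV.sqrt_sqrt, QMV.neg_neg, hr] at h2
      rw [h2, SQPMV.sqrt_half, SQ.q_neg_half]
      exact h1
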